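/- Let σ : ℕ → ℝ be a sequence with ∑_{k} σ_k² < ∞, and let μ^σ = ⊗_{k∈ℕ} gaussianReal 0 (σ_k²) be the product Gaussian measure on ℝ^ℕ. Then for every L > 0, μ^σ({a ∈ ℝ^ℕ : |a_k| ≤ L for all k}) > 0. -/

import Mathlib

open MeasureTheory ProbabilityTheory Real NNReal ENNReal Filter

lemma pgcp_tail_int (c L : ℝ) (hc : 0 < c) :
    ∫ x in Set.Ioi L, x * rexp (-c * x ^ 2) = rexp (-c * L ^ 2) / (2 * c) := by
  have h := MeasureTheory.integral_Ioi_of_hasDerivAt_of_tendsto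
    (f := fun x : ℝ => -rexp (-c * x ^ 2) / (2 * c))
    (f' := fun x : ℝ => x * rexp (-c * x ^ 2)) (a := L) (m := 0)
    ?_ ?_ ?_ ?_
  · rw [h]; ring
  · exact (((continuous_const.mul (continuous_pow 2)).rexp.neg.div_const _)).continuousWithinAt
  · intro x hx
    have h1 : HasDerivAt (fun x : ℝ => -c * x ^ 2) (-c * (2 * x)) x := by
      simpa using ((hasDerivAt_pow 2 x).const_mul (-c))
    have h2 := (h1.exp.neg).div_const (2 * c)
    convert h2 using 1
    · rfl
    · rfl
    rw [_root_.eq_div_iff (by positivity)]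
    ring
  · exact (integrable_mul_exp_neg_mul_sq hc).integrableOn
  · have h1 : Filter.Tendsto (fun x : ℝ => -c * x ^ 2) Filter.atTop Filter.atBot := by
      exact Filter.tendsto_neg_const_mul_pow_atTop (n := 2) (c := -c) two_ne_zero (by linarith)
    have := (Real.tendsto_exp_atBot.comp h1).neg.div_const (2 * c)
    simpa using this

lemma pgcp_one_side (v : ℝ≥0) (hv : v ≠ 0) (L : ℝ) (hL : 0 < L) :
    ∫ x in Set.Ioi L, gaussianPDFReal 0 v x ≤ 2 * v * Real.sqrt v / L ^ 3 := by
  have hv0 : (0:ℝ) < v := lt_of_le_of_ne v.coe_nonneg (by exact_mod_cast hv.symm)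
  set c : ℝ := (2 * (v:ℝ))⁻¹ with hc_def
  have hc : 0 < c := by positivity
  set A : ℝ := (Real.sqrt (2 * π * v))⁻¹ with hA_def
  have hA0 : 0 < Real.sqrt (2 * π * v) := Real.sqrt_pos.mpr (by positivity)
  have hA : 0 < A := by positivity
  have hpdf : ∀ x : ℝ, gaussianPDFReal 0 v x = A * rexp (-c * x ^ 2) := by
    intro x
    simp only [gaussianPDFReal, sub_zero, hA_def, hc_def]
    congr 1
    rw [neg_div]
    congr 1
    field_simp
  have step1 : ∫ x in Set.Ioi L, gaussianPDFReal 0 v x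
      ≤ ∫ x in Set.Ioi L, A * L⁻¹ * (x * rexp (-c * x ^ 2)) := by
    refine setIntegral_mono_on ((integrable_gaussianPDFReal 0 v).integrableOn)
      (((integrable_mul_exp_neg_mul_sq hc).const_mul _).integrableOn)
      measurableSet_Ioi ?_
    intro x hx
    rw [hpdf x]
    have hx' : L ≤ x := le_of_lt hx
    have he : 0 < rexp (-c * x ^ 2) := Real.exp_pos _
    have h1 : rexp (-c * x ^ 2) ≤ L⁻¹ * (x * rexp (-c * x ^ 2)) := by
      have h2 : 1 ≤ L⁻¹ * x := by rw [inv_mul_eq_div]; exact (one_le_div hL).mpr hx'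
      rw [← mul_assoc]
      nlinarith [mul_le_mul_of_nonneg_right h2 he.le]
    calc A * rexp (-c * x ^ 2) ≤ A * (L⁻¹ * (x * rexp (-c * x ^ 2))) :=
          mul_le_mul_of_nonneg_left h1 hA.le
      _ = A * L⁻¹ * (x * rexp (-c * x ^ 2)) := by ring
  have step2 : ∫ x in Set.Ioi L, A * L⁻¹ * (x * rexp (-c * x ^ 2))
      = A * L⁻¹ * (rexp (-c * L ^ 2) / (2 * c)) := by
    rw [integral_const_mul, pgcp_tail_int c L hc]
  have hexp : rexp (-c * L ^ 2) ≤ (c * L ^ 2)⁻¹ := by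
    have ht : 0 < c * L ^ 2 := by positivity
    rw [neg_mul, Real.exp_neg]
    exact inv_anti₀ ht (by linarith [Real.add_one_le_exp (c * L^2)])
  have hsq : Real.sqrt v * Real.sqrt v = (v:ℝ) := Real.mul_self_sqrt v.coe_nonneg
  have hsv : 0 < Real.sqrt v := Real.sqrt_pos.mpr hv0
  have hAle : A ≤ (Real.sqrt v)⁻¹ := by
    refine inv_anti₀ hsv ?_
    exact Real.sqrt_le_sqrt (by nlinarith [Real.pi_gt_three])
  calc ∫ x in Set.Ioi L, gaussianPDFReal 0 v x
      ≤ A * L⁻¹ * (rexp (-c * L ^ 2) / (2 * c)) := step1.trans step2.le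
    _ ≤ A * L⁻¹ * ((c * L ^ 2)⁻¹ / (2 * c)) := by
        refine mul_le_mul_of_nonneg_left ?_ (by positivity)
        exact div_le_div_of_nonneg_right hexp (by positivity)
    _ = A * (2 * (v:ℝ)^2 / L ^ 3) := by
        rw [hc_def]
        field_simp
    _ ≤ (Real.sqrt v)⁻¹ * (2 * (v:ℝ)^2 / L ^ 3) := by
        refine mul_le_mul_of_nonneg_right hAle (by positivity)
    _ = 2 * v * Real.sqrt v / L ^ 3 := by
        field_simp
        linear_combination (-1:ℝ) * hsq

lemma pgcp_gauss_tail (v : ℝ≥0) (L : ℝ) (hL : 0 < L) :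
    gaussianReal 0 v (Set.Icc (-L) L)ᶜ ≤ ENNReal.ofReal (4 * v * Real.sqrt v / L ^ 3) := by
  by_cases hv : v = 0
  · subst hv
    rw [gaussianReal_zero_var, Measure.dirac_apply' _ measurableSet_Icc.compl]
    have h0 : (0:ℝ) ∈ Set.Icc (-L) L := by constructor <;> linarith
    simp only [Set.indicator_apply, Set.mem_compl_iff, h0, not_true_eq_false, if_false]
    positivity
  · have hIic : ∫ x in Set.Iic (-L), gaussianPDFReal 0 v x
        = ∫ x in Set.Ioi L, gaussianPDFReal 0 v x := by
      rw [← integral_comp_neg_Ioi]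
      congr 1
      ext x
      simp [gaussianPDFReal, neg_sq]
    have hsub : (Set.Icc (-L) L)ᶜ ⊆ Set.Iic (-L) ∪ Set.Ioi L := by
      intro x hx
      simp only [Set.mem_compl_iff, Set.mem_Icc, not_and_or, not_le] at hx
      rcases hx with h | h
      · exact Or.inl (by simp; linarith)
      · exact Or.inr h
    have hone := pgcp_one_side v hv L hL
    calc gaussianReal 0 v (Set.Icc (-L) L)ᶜ
        ≤ gaussianReal 0 v (Set.Iic (-L) ∪ Set.Ioi L) := measure_mono hsub
      _ ≤ gaussianReal 0 v (Set.Iic (-L)) + gaussianReal 0 v (Set.Ioi L) := measure_union_le _ _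
      _ ≤ ENNReal.ofReal (2 * v * Real.sqrt v / L ^ 3)
          + ENNReal.ofReal (2 * v * Real.sqrt v / L ^ 3) := by
          gcongr
          · rw [gaussianReal_apply_eq_integral 0 hv, hIic]
            exact ENNReal.ofReal_le_ofReal hone
          · rw [gaussianReal_apply_eq_integral 0 hv]
            exact ENNReal.ofReal_le_ofReal hone
      _ = ENNReal.ofReal (4 * v * Real.sqrt v / L ^ 3) := by
          rw [← ENNReal.ofReal_add (by positivity) (by positivity)]
          congr 1
          ring

lemma pgcp_prod_one_sub (t : ℕ → ℝ) (s : Finset ℕ) (h0 : ∀ i ∈ s, 0 ≤ t i)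
    (h1 : ∀ i ∈ s, t i ≤ 1) :
    1 - ∑ i ∈ s, t i ≤ ∏ i ∈ s, (1 - t i) := by
  induction s using Finset.induction_on with
  | empty => simp
  | insert _ _ ha ih =>
    rename_i a s'
    rw [Finset.prod_insert ha, Finset.sum_insert ha]
    have IH := ih (fun i hi => h0 i (Finset.mem_insert_of_mem hi))
      (fun i hi => h1 i (Finset.mem_insert_of_mem hi))
    have h0a := h0 a (Finset.mem_insert_self a s')
    have h1a := h1 a (Finset.mem_insert_self a s')
    have hsum : 0 ≤ ∑ i ∈ s', t i :=
      Finset.sum_nonneg (fun i hi => h0 i (Finset.mem_insert_of_mem hi))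
    nlinarith [mul_nonneg (sub_nonneg.2 h1a) (sub_nonneg.2 IH), mul_nonneg h0a hsum]

/-- **Positivity of cubes under product Gaussian measures with summable variances.**
Let `σ : ℕ → ℝ` with `∑ₖ σₖ² < ∞`, and let `μ^σ = ⊗ₖ gaussianReal 0 (σₖ²)` be
the product Gaussian measure on `ℝ^ℕ` — i.e. the probability measure whose
finite-dimensional marginals are the finite products of the Gaussian measures
`gaussianReal 0 (σₖ²)`.  Then for every `L > 0`,
`μ^σ {a | ∀ k, |a k| ≤ L} > 0`. -/
theorem product_gaussian_cube_pos
    (σ : ℕ → ℝ) (hσ : Summable (fun k => σ k ^ 2))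
    (μ : Measure (ℕ → ℝ)) [IsProbabilityMeasure μ]
    (hμ : ∀ n : ℕ, μ.map (fun a (i : Fin n) => a i)
        = Measure.pi (fun i : Fin n => gaussianReal 0 ⟨σ i ^ 2, sq_nonneg _⟩))
    (L : ℝ) (hL : 0 < L) :
    0 < μ {a : ℕ → ℝ | ∀ k, |a k| ≤ L} := by
  classical
  -- variances
  set v : ℕ → ℝ≥0 := fun k => (⟨σ k ^ 2, sq_nonneg _⟩ : ℝ≥0) with hv_def
  -- tail bounds
  set b : ℕ → ℝ := fun k => 4 * (v k : ℝ) * Real.sqrt (v k) / L ^ 3 with hb_def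
  have hb_nonneg : ∀ k, 0 ≤ b k := by
    intro k
    have : (0:ℝ) ≤ (v k : ℝ) := (v k).coe_nonneg
    positivity
  -- summability of b
  have hb_sum : Summable b := by
    set M : ℝ := ∑' k, σ k ^ 2 with hM_def
    have hMk : ∀ k, σ k ^ 2 ≤ M := fun k => hσ.le_tsum k (fun i _ => sq_nonneg _)
    have hM0 : 0 ≤ M := (sq_nonneg _).trans (hMk 0)
    refine Summable.of_nonneg_of_le hb_nonneg (fun k => ?_)
      ((hσ.mul_left (4 * Real.sqrt M / L ^ 3)))
    have hco : (v k : ℝ) = σ k ^ 2 := rfl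
    have hs : Real.sqrt (v k) ≤ Real.sqrt M := Real.sqrt_le_sqrt (by rw [hco]; exact hMk k)
    have h1 : (0:ℝ) ≤ (v k : ℝ) := (v k).coe_nonneg
    rw [hb_def]
    simp only [hco] at hs h1 ⊢
    rw [div_le_iff₀ (by positivity)]
    have : 4 * σ k ^ 2 * Real.sqrt (σ k ^ 2) ≤ 4 * σ k ^ 2 * Real.sqrt M := by
      refine mul_le_mul_of_nonneg_left hs (by positivity)
    calc 4 * σ k ^ 2 * Real.sqrt (σ k ^ 2) ≤ 4 * σ k ^ 2 * Real.sqrt M := this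
      _ = 4 * Real.sqrt M / L ^ 3 * σ k ^ 2 * L ^ 3 := by field_simp
  -- single-coordinate measures
  set p : ℕ → ℝ≥0∞ := fun k => gaussianReal 0 (v k) (Set.Icc (-L) L) with hp_def
  have hp_le_one : ∀ k, p k ≤ 1 := fun k => prob_le_one
  have hp_ne_top : ∀ k, p k ≠ ⊤ := fun k => ((hp_le_one k).trans_lt ENNReal.one_lt_top).ne
  set r : ℕ → ℝ := fun k => (p k).toReal with hr_def
  have hr_nonneg : ∀ k, 0 ≤ r k := fun k => ENNReal.toReal_nonneg
  have hr_le_one : ∀ k, r k ≤ 1 := by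
    intro k
    rw [hr_def]
    simpa using ENNReal.toReal_mono (by simp) (hp_le_one k)
  have hr_pos : ∀ k, 0 < r k := by
    intro k
    refine ENNReal.toReal_pos ?_ (hp_ne_top k)
    by_cases hvk : v k = 0
    · rw [hp_def]
      simp only [hvk, gaussianReal_zero_var]
      rw [Measure.dirac_apply' _ measurableSet_Icc]
      have h0 : (0:ℝ) ∈ Set.Icc (-L) L := by constructor <;> linarith
      simp [h0]
    · intro h0
      have hac := gaussianReal_absolutelyContinuous' (0:ℝ) hvk
      have := hac h0
      rw [Real.volume_Icc] at this
      simp only [ENNReal.ofReal_eq_zero, sub_neg_eq_add] at this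
      linarith
  have hr_lb : ∀ k, 1 - b k ≤ r k := by
    intro k
    have htail := pgcp_gauss_tail (v k) L hL
    have hcompl : p k + gaussianReal 0 (v k) (Set.Icc (-L) L)ᶜ = 1 := by
      show gaussianReal 0 (v k) (Set.Icc (-L) L) + gaussianReal 0 (v k) (Set.Icc (-L) L)ᶜ = 1
      have h := measure_add_measure_compl (μ := gaussianReal 0 (v k))
        (measurableSet_Icc (a := -L) (b := L))
      rwa [measure_univ] at h
    have hq_ne_top : gaussianReal 0 (v k) (Set.Icc (-L) L)ᶜ ≠ ⊤ :=
      (measure_ne_top _ _)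
    have hreal : r k + (gaussianReal 0 (v k) (Set.Icc (-L) L)ᶜ).toReal = 1 := by
      rw [hr_def]
      rw [← ENNReal.toReal_add (hp_ne_top k) hq_ne_top, hcompl]
      simp
    have hqle : (gaussianReal 0 (v k) (Set.Icc (-L) L)ᶜ).toReal ≤ b k :=
      ENNReal.toReal_le_of_le_ofReal (hb_nonneg k) htail
    linarith
  -- choose N beyond which tails sum to < 1/2
  obtain ⟨s, hs⟩ := summable_iff_vanishing.mp hb_sum (Set.Iio (1/2 : ℝ))
    (isOpen_Iio.mem_nhds (by norm_num : (0:ℝ) < 1/2))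
  obtain ⟨N, hsN⟩ := s.exists_nat_subset_range
  have hdisj : ∀ t : Finset ℕ, (∀ i ∈ t, N ≤ i) → ∑ i ∈ t, b i < 1/2 := by
    intro t ht
    refine hs t ?_
    refine Finset.disjoint_left.mpr (fun i hi hi' => ?_)
    have := Finset.mem_range.mp (hsN hi')
    exact absurd (ht i hi) (by omega)
  have hb_small : ∀ i, N ≤ i → b i ≤ 1 := by
    intro i hi
    have := hdisj {i} (by simpa using hi)
    simp at this
    linarith
  -- the key finite-product lower bound
  set K : ℝ := (∏ i ∈ Finset.range N, r i) * (1/2) with hK_def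
  have hK_pos : 0 < K := by
    rw [hK_def]
    have : 0 < ∏ i ∈ Finset.range N, r i := Finset.prod_pos (fun i _ => hr_pos i)
    linarith
  have hprod_lb : ∀ n : ℕ, K ≤ ∏ i ∈ Finset.range n, r i := by
    intro n
    rcases le_total n N with h | h
    · have hsplit := Finset.prod_range_mul_prod_Ico r h
      have h2 : ∏ i ∈ Finset.Ico n N, r i ≤ 1 :=
        Finset.prod_le_one (fun i _ => hr_nonneg i) (fun i _ => hr_le_one i)
      have h3 : 0 ≤ ∏ i ∈ Finset.range n, r i :=
        Finset.prod_nonneg (fun i _ => hr_nonneg i)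
      rw [hK_def]
      nlinarith [Finset.prod_nonneg (fun i (_ : i ∈ Finset.range N) => hr_nonneg i)]
    · have hsplit := Finset.prod_range_mul_prod_Ico r h
      have h2 : 1/2 ≤ ∏ i ∈ Finset.Ico N n, r i := by
        have hIco : ∀ i ∈ Finset.Ico N n, N ≤ i := fun i hi => (Finset.mem_Ico.mp hi).1
        have hle : ∏ i ∈ Finset.Ico N n, (1 - b i) ≤ ∏ i ∈ Finset.Ico N n, r i := by
          refine Finset.prod_le_prod (fun i hi => ?_) (fun i hi => hr_lb i)
          have := hb_small i (hIco i hi)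
          linarith
        have hlb := pgcp_prod_one_sub b (Finset.Ico N n)
          (fun i _ => hb_nonneg i) (fun i hi => hb_small i (hIco i hi))
        have hsum := hdisj (Finset.Ico N n) hIco
        linarith
      rw [hK_def, ← hsplit]
      have h1 : 0 ≤ ∏ i ∈ Finset.range N, r i :=
        Finset.prod_nonneg (fun i _ => hr_nonneg i)
      nlinarith
  -- cylinder sets
  set A : ℕ → Set (ℕ → ℝ) := fun n =>
    (fun a (i : Fin n) => a i) ⁻¹' (Set.pi Set.univ (fun _ : Fin n => Set.Icc (-L) L))
    with hA_def
  have hproj : ∀ n : ℕ, Measurable (fun (a : ℕ → ℝ) (i : Fin n) => a (i : ℕ)) := by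
    intro n
    exact measurable_pi_lambda _ (fun i => measurable_pi_apply _)
  have hSmeas : ∀ n : ℕ, MeasurableSet (Set.pi Set.univ (fun _ : Fin n => Set.Icc (-L) L)) :=
    fun n => MeasurableSet.univ_pi (fun _ => measurableSet_Icc)
  have hAmeas : ∀ n, MeasurableSet (A n) := fun n => (hSmeas n).preimage (hproj n)
  have hAval : ∀ n, μ (A n) = ENNReal.ofReal (∏ i ∈ Finset.range n, r i) := by
    intro n
    have h1 : μ (A n) = (μ.map (fun a (i : Fin n) => a i))
        (Set.pi Set.univ (fun _ : Fin n => Set.Icc (-L) L)) := by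
      rw [Measure.map_apply (hproj n) (hSmeas n)]
    rw [h1, hμ n, Measure.pi_pi (μ := fun i : Fin n => gaussianReal 0 (v i))]
    have h2 : ∀ i : Fin n, gaussianReal 0 (⟨σ (i:ℕ) ^ 2, sq_nonneg _⟩ : ℝ≥0) (Set.Icc (-L) L)
        = ENNReal.ofReal (r i) := by
      intro i
      rw [hr_def, ENNReal.ofReal_toReal (hp_ne_top i)]
    simp_rw [show ∀ i : Fin n, gaussianReal 0 (v i) (Set.Icc (-L) L) = ENNReal.ofReal (r i) from h2]
    rw [← Fin.prod_univ_eq_prod_range (fun i => r i) n]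
    exact (ENNReal.ofReal_prod_of_nonneg (f := fun i : Fin n => r i) (s := Finset.univ) (fun i _ => hr_nonneg i)).symm
  -- the target set as an intersection
  have hInter : {a : ℕ → ℝ | ∀ k, |a k| ≤ L} = ⋂ n, A n := by
    ext a
    simp only [Set.mem_setOf_eq, Set.mem_iInter, hA_def, Set.mem_preimage, Set.mem_pi,
      Set.mem_univ, forall_true_left, Set.mem_Icc, true_implies]
    constructor
    · intro h n i
      have := h (i : ℕ)
      rw [abs_le] at this
      exact this
    · intro h k
      rw [abs_le]
      exact h (k+1) ⟨k, Nat.lt_succ_self k⟩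
  have hanti : Antitone A := by
    intro m n hmn a ha
    simp only [hA_def, Set.mem_preimage, Set.mem_pi, Set.mem_univ, true_implies] at ha ⊢
    intro i
    exact ha ⟨(i : ℕ), lt_of_lt_of_le i.2 hmn⟩
  have htend := tendsto_measure_iInter_atTop
    (fun n => (hAmeas n).nullMeasurableSet) hanti ⟨0, measure_ne_top μ _⟩
  have hlim : ENNReal.ofReal K ≤ μ (⋂ n, A n) := by
    refine ge_of_tendsto htend (Filter.Eventually.of_forall (fun n => ?_))
    show ENNReal.ofReal K ≤ μ (A n)
    rw [hAval n]
    exact ENNReal.ofReal_le_ofReal (hprod_lb n)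
  rw [hInter]
  calc (0:ℝ≥0∞) < ENNReal.ofReal K := ENNReal.ofReal_pos.mpr hK_pos
    _ ≤ μ (⋂ n, A n) := hlim
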